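/- Let α ∈ (0,1), T > 0, A ∈ ℝ^{n×n}. If for some nonzero y₀ ∈ ℝⁿ the analytic function s ↦ Bᵀ E_{α,α}(s^α Aᵀ) y₀ vanishes for all s ∈ [0,T], then Bᵀ (Aᵀ)^k y₀ = 0 for all k ∈ ℕ. -/

import Mathlib

open Matrix

/-- The two-parameter Mittag-Leffler matrix function of a real n×n matrix. -/
noncomputable def mlMat {n : ℕ} (α β : ℝ) (M : Matrix (Fin n) (Fin n) ℝ) :
    Matrix (Fin n) (Fin n) ℝ :=
  ∑' k : ℕ, (Real.Gamma (α * k + β))⁻¹ • M ^ k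

attribute [local instance] Matrix.seminormedAddCommGroup Matrix.normedAddCommGroup
  Matrix.normedSpace

/-- Summability of the Mittag-Leffler coefficient series against any geometric factor. -/
lemma gammaSummable {α : ℝ} (hα : 0 < α) (x : ℝ) (hx : 0 ≤ x) :
    Summable (fun k : ℕ => (Real.Gamma (α * k + α))⁻¹ * x ^ k) := by
  have hGpos : ∀ j : ℕ, 0 < Real.Gamma (α * j + α) := fun j =>
    Real.Gamma_pos_of_pos (by positivity)
  set X : ℝ := max x 1 with hXdef
  have hX1 : (1 : ℝ) ≤ X := le_max_right _ _
  have hxX : x ≤ X := le_max_left _ _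
  have hX0 : (0 : ℝ) < X := lt_of_lt_of_le one_pos hX1
  have h2X : (1 : ℝ) ≤ 2 * X := by nlinarith
  obtain ⟨M, hM⟩ := exists_nat_ge ((2 * X) ^ (2 / α))
  have hM1 : (2 * X) ^ (2 / α) ≤ (M : ℝ) + 1 := hM.trans (by linarith)
  obtain ⟨K, hK⟩ := exists_nat_ge (2 * ((M : ℝ) + 4) / α)
  have hKe : 2 * ((M : ℝ) + 4) ≤ α * K := by
    rw [div_le_iff₀ hα] at hK; linarith [hK]
  have key : ∀ k : ℕ, K ≤ k → (Real.Gamma (α * k + α))⁻¹ * x ^ k ≤ (1 / 2) ^ k := by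
    intro k hk
    have hkk : (K : ℝ) ≤ (k : ℝ) := Nat.cast_le.mpr hk
    have hak : 2 * ((M : ℝ) + 4) ≤ α * k := hKe.trans (by nlinarith)
    set y : ℝ := α * k + α with hy
    have hy4 : (M : ℝ) + 4 ≤ y := by nlinarith
    have hy0 : 0 < y := by nlinarith
    set b : ℕ := ⌊y⌋₊ with hb
    have hble : (b : ℝ) ≤ y := Nat.floor_le hy0.le
    have hbge : y - 1 < (b : ℝ) := Nat.sub_one_lt_floor y
    have hbM : M + 4 ≤ b := by
      have : ((M + 4 : ℕ) : ℝ) ≤ y := by push_cast; linarith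
      exact Nat.le_floor this
    have hb1 : 1 ≤ b := by omega
    have hGam : Real.Gamma ((b : ℝ)) ≤ Real.Gamma y := by
      refine Real.Gamma_strictMonoOn_Ici.monotoneOn ?_ ?_ hble
      · simp only [Set.mem_Ici]
        have : ((4 : ℕ) : ℝ) ≤ (b : ℝ) := by exact_mod_cast (by omega : 4 ≤ b)
        push_cast at this; linarith
      · simp only [Set.mem_Ici]; linarith
    have hfact : Real.Gamma ((b : ℝ)) = ((b - 1).factorial : ℝ) := by
      have hb' : ((b : ℝ)) = ((b - 1 : ℕ) : ℝ) + 1 := by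
        have h : b - 1 + 1 = b := Nat.succ_pred_eq_of_pos hb1
        exact_mod_cast h.symm
      rw [hb', Real.Gamma_nat_eq_factorial]
    have hfge : ((M + 1 : ℕ) : ℝ) ^ (b - 1 - M) ≤ ((b - 1).factorial : ℝ) := by
      have h1 : M.factorial * (M + 1) ^ (b - 1 - M) ≤ (M + (b - 1 - M)).factorial :=
        Nat.factorial_mul_pow_le_factorial
      have h2 : M + (b - 1 - M) = b - 1 := by omega
      rw [h2] at h1
      exact_mod_cast le_trans (Nat.le_mul_of_pos_left _ M.factorial_pos) h1
    set e : ℕ := b - 1 - M with he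
    have hecast : (e : ℝ) = (b : ℝ) - 1 - M := by
      rw [he, Nat.cast_sub (by omega : M ≤ b - 1), Nat.cast_sub hb1]
      push_cast; ring
    have hee : α * k / 2 ≤ (e : ℝ) := by
      rw [hecast]; nlinarith
    -- (M+1)^e ≥ (2X)^k
    have hpow : (2 * X) ^ k ≤ ((M + 1 : ℕ) : ℝ) ^ e := by
      have h2X0 : (0 : ℝ) ≤ 2 * X := by linarith
      have hbase : (0 : ℝ) ≤ (2 * X) ^ (2 / α) := Real.rpow_nonneg h2X0 _
      calc (2 * X) ^ k = (2 * X) ^ ((k : ℕ) : ℝ) := (Real.rpow_natCast _ _).symm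
        _ ≤ (2 * X) ^ ((2 / α) * (e : ℝ)) := by
            apply Real.rpow_le_rpow_of_exponent_le h2X
            rw [mul_comm]
            calc (k : ℝ) = (α * k / 2) * (2 / α) := by field_simp
              _ ≤ (e : ℝ) * (2 / α) := by
                  apply mul_le_mul_of_nonneg_right hee; positivity
        _ = ((2 * X) ^ (2 / α)) ^ ((e : ℕ) : ℝ) := Real.rpow_mul h2X0 _ _
        _ ≤ ((M : ℝ) + 1) ^ ((e : ℕ) : ℝ) := by
            apply Real.rpow_le_rpow hbase hM1 (by positivity)
        _ = ((M : ℝ) + 1) ^ e := Real.rpow_natCast _ _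
        _ = ((M + 1 : ℕ) : ℝ) ^ e := by push_cast; ring
    have hGy : (2 * X) ^ k ≤ Real.Gamma y := by
      calc (2 * X) ^ k ≤ ((M + 1 : ℕ) : ℝ) ^ e := hpow
        _ ≤ ((b - 1).factorial : ℝ) := hfge
        _ = Real.Gamma ((b : ℝ)) := hfact.symm
        _ ≤ Real.Gamma y := hGam
    have h2Xk : (0 : ℝ) < (2 * X) ^ k := by positivity
    have hGyinv : (Real.Gamma y)⁻¹ ≤ ((2 * X) ^ k)⁻¹ :=
      inv_anti₀ h2Xk hGy
    calc (Real.Gamma y)⁻¹ * x ^ k ≤ ((2 * X) ^ k)⁻¹ * X ^ k := by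
          apply mul_le_mul hGyinv (pow_le_pow_left₀ hx hxX k) (by positivity)
          positivity
      _ = (1 / 2) ^ k := by
          rw [mul_pow]
          field_simp
          ring_nf
          rw [← mul_pow]; norm_num
  rw [← summable_nat_add_iff K]
  refine Summable.of_nonneg_of_le (fun k => ?_) (fun k => key (k + K) (by omega)) ?_
  · have := hGpos (k + K); positivity
  · exact (summable_nat_add_iff K).2 (summable_geometric_of_lt_one (by norm_num) (by norm_num))

/-- Entrywise bound on powers of a matrix. -/
lemma entry_pow_le {n : ℕ} (M : Matrix (Fin n) (Fin n) ℝ) (k : ℕ) (i j : Fin n) :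
    |(M ^ k) i j| ≤ ((n : ℝ) * ‖M‖ + 1) ^ k := by
  have hM0 : (0 : ℝ) ≤ ‖M‖ := norm_nonneg _
  induction k generalizing i j with
  | zero =>
    simp only [pow_zero, Matrix.one_apply]
    split <;> simp
  | succ k ih =>
    rw [pow_succ']
    rw [Matrix.mul_apply]
    calc |∑ l, M i l * (M ^ k) l j| ≤ ∑ l, |M i l * (M ^ k) l j| :=
          Finset.abs_sum_le_sum_abs _ _
      _ ≤ ∑ _l : Fin n, ‖M‖ * ((n : ℝ) * ‖M‖ + 1) ^ k := by
          apply Finset.sum_le_sum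
          intro l _
          rw [abs_mul]
          exact mul_le_mul (Matrix.norm_entry_le_entrywise_sup_norm M)
            (ih l j) (abs_nonneg _) hM0
      _ = (n : ℝ) * ‖M‖ * ((n : ℝ) * ‖M‖ + 1) ^ k := by
          rw [Finset.sum_const, Finset.card_univ, Fintype.card_fin]; push_cast; ring
      _ ≤ ((n : ℝ) * ‖M‖ + 1) ^ (k + 1) := by
          rw [pow_succ]
          have h1 : (0 : ℝ) ≤ ((n : ℝ) * ‖M‖ + 1) ^ k := by positivity
          nlinarith [h1]

/-- if `s ↦ Bᵀ E_{α,α}(s^α Aᵀ) y₀` vanishes on `[0,T]` for a nonzero `y₀`,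
then `Bᵀ (Aᵀ)^k y₀ = 0` for all `k`. -/
theorem stmt8 (n m : ℕ) (α T : ℝ) (hα : α ∈ Set.Ioo (0 : ℝ) 1) (hT : 0 < T)
    (A : Matrix (Fin n) (Fin n) ℝ) (B : Matrix (Fin n) (Fin m) ℝ)
    (y₀ : Fin n → ℝ) (hy₀ : y₀ ≠ 0)
    (hvanish : ∀ s ∈ Set.Icc (0 : ℝ) T,
      Bᵀ.mulVec ((mlMat α α ((s ^ α) • Aᵀ)).mulVec y₀) = 0) :
    ∀ k : ℕ, Bᵀ.mulVec ((Aᵀ ^ k).mulVec y₀) = 0 := by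
  obtain ⟨hα0, hα1⟩ := hα
  have hGpos : ∀ j : ℕ, 0 < Real.Gamma (α * j + α) := fun j =>
    Real.Gamma_pos_of_pos (by positivity)
  intro k0
  funext i
  set wv : ℕ → ℝ := fun k => Bᵀ.mulVec ((Aᵀ ^ k).mulVec y₀) i with hwv
  set c : ℕ → ℝ := fun k => (Real.Gamma (α * k + α))⁻¹ * wv k with hc
  suffices hcz : c = 0 by
    have h0 : (Real.Gamma (α * k0 + α))⁻¹ * wv k0 = 0 := congrFun hcz k0
    have hne : (Real.Gamma (α * k0 + α))⁻¹ ≠ 0 := inv_ne_zero (hGpos k0).ne'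
    show wv k0 = 0
    rcases mul_eq_zero.mp h0 with h | h
    · exact absurd h hne
    · exact h
  -- the linear functional M ↦ (Bᵀ (M y₀))_i
  let φL : Matrix (Fin n) (Fin n) ℝ →ₗ[ℝ] ℝ :=
    { toFun := fun M => Bᵀ.mulVec (M.mulVec y₀) i
      map_add' := fun M N => by
        simp [Matrix.add_mulVec, Matrix.mulVec_add]
      map_smul' := fun a M => by
        simp [Matrix.smul_mulVec, Matrix.mulVec_smul] }
  let φ := LinearMap.toContinuousLinearMap φL
  have hφA : ∀ k : ℕ, φ (Aᵀ ^ k) = wv k := fun k => rfl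
  set D : ℝ := (n : ℝ) * ‖Aᵀ‖ + 1 with hD
  have hD0 : (0 : ℝ) ≤ D := by positivity
  have hApow : ∀ k : ℕ, ‖Aᵀ ^ k‖ ≤ D ^ k := fun k =>
    (Matrix.norm_le_iff (by positivity)).2 fun i' j' => by
      rw [Real.norm_eq_abs]; exact entry_pow_le Aᵀ k i' j'
  have hwvle : ∀ k : ℕ, |wv k| ≤ (n : ℝ) ^ 2 * ‖Bᵀ‖ * ‖y₀‖ * D ^ k := by
    intro k
    have hv : ∀ j, |((Aᵀ ^ k).mulVec y₀) j| ≤ (n : ℝ) * (D ^ k * ‖y₀‖) := by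
      intro j
      rw [Matrix.mulVec, dotProduct]
      calc |∑ l, (Aᵀ ^ k) j l * y₀ l| ≤ ∑ l, |(Aᵀ ^ k) j l * y₀ l| :=
            Finset.abs_sum_le_sum_abs _ _
        _ ≤ ∑ _l : Fin n, D ^ k * ‖y₀‖ := by
            apply Finset.sum_le_sum
            intro l _
            rw [abs_mul]
            apply mul_le_mul (entry_pow_le Aᵀ k j l) _ (abs_nonneg _) (by positivity)
            simpa [Real.norm_eq_abs] using norm_le_pi_norm y₀ l
        _ = (n : ℝ) * (D ^ k * ‖y₀‖) := by
            rw [Finset.sum_const, Finset.card_univ, Fintype.card_fin, nsmul_eq_mul]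
    show |Bᵀ.mulVec ((Aᵀ ^ k).mulVec y₀) i| ≤ _
    rw [Matrix.mulVec, dotProduct]
    calc |∑ j, Bᵀ i j * ((Aᵀ ^ k).mulVec y₀) j|
        ≤ ∑ j, |Bᵀ i j * ((Aᵀ ^ k).mulVec y₀) j| := Finset.abs_sum_le_sum_abs _ _
      _ ≤ ∑ _j : Fin n, ‖Bᵀ‖ * ((n : ℝ) * (D ^ k * ‖y₀‖)) := by
          apply Finset.sum_le_sum
          intro j _
          rw [abs_mul]
          exact mul_le_mul (Matrix.norm_entry_le_entrywise_sup_norm Bᵀ) (hv j)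
            (abs_nonneg _) (norm_nonneg _)
      _ = (n : ℝ) * (‖Bᵀ‖ * ((n : ℝ) * (D ^ k * ‖y₀‖))) := by
          rw [Finset.sum_const, Finset.card_univ, Fintype.card_fin, nsmul_eq_mul]
      _ = (n : ℝ) ^ 2 * ‖Bᵀ‖ * ‖y₀‖ * D ^ k := by ring
  have hcsum : ∀ r : ℝ, 0 ≤ r → Summable fun k : ℕ => |c k| * r ^ k := by
    intro r hr
    have h := (gammaSummable hα0 (D * r) (by positivity)).mul_left
      ((n : ℝ) ^ 2 * ‖Bᵀ‖ * ‖y₀‖)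
    refine Summable.of_nonneg_of_le (fun k => by positivity) (fun k => ?_) h
    calc |c k| * r ^ k = (Real.Gamma (α * k + α))⁻¹ * |wv k| * r ^ k := by
          rw [hc, abs_mul, abs_inv, abs_of_pos (hGpos k)]
      _ ≤ (Real.Gamma (α * k + α))⁻¹ * ((n : ℝ) ^ 2 * ‖Bᵀ‖ * ‖y₀‖ * D ^ k) * r ^ k := by
          apply mul_le_mul_of_nonneg_right _ (by positivity)
          exact mul_le_mul_of_nonneg_left (hwvle k) (inv_nonneg.2 (hGpos k).le)
      _ = (n : ℝ) ^ 2 * ‖Bᵀ‖ * ‖y₀‖ * ((Real.Gamma (α * k + α))⁻¹ * (D * r) ^ k) := by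
          rw [mul_pow]; ring
  set p := FormalMultilinearSeries.ofScalars ℝ c with hpdef
  have hrad : 0 < p.radius := by
    have h1 : ((1 : NNReal) : ENNReal) ≤ p.radius := by
      apply FormalMultilinearSeries.le_radius_of_summable_norm
      simp only [hpdef, FormalMultilinearSeries.ofScalars_norm, Real.norm_eq_abs,
        NNReal.coe_one]
      exact hcsum 1 zero_le_one
    exact lt_of_lt_of_le (by norm_num) h1
  set f := FormalMultilinearSeries.ofScalarsSum (E := ℝ) c with hfdef
  have hfps : HasFPowerSeriesAt f p 0 := (p.hasFPowerSeriesOnBall hrad).hasFPowerSeriesAt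
  have hkey : ∀ u : ℝ, f u = Bᵀ.mulVec ((mlMat α α (u • Aᵀ)).mulVec y₀) i := by
    intro u
    have hsum : Summable fun k : ℕ => (Real.Gamma (α * k + α))⁻¹ • (u • Aᵀ) ^ k := by
      refine Summable.of_norm_bounded
        (gammaSummable hα0 ((n : ℝ) * ‖u • Aᵀ‖ + 1) (by positivity)) fun k => ?_
      rw [norm_smul, Real.norm_eq_abs, abs_inv, abs_of_pos (hGpos k)]
      apply mul_le_mul_of_nonneg_left _ (inv_nonneg.2 (hGpos k).le)
      exact (Matrix.norm_le_iff (by positivity)).2 fun i' j' => by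
        rw [Real.norm_eq_abs]; exact entry_pow_le (u • Aᵀ) k i' j'
    have hφt : φ (mlMat α α (u • Aᵀ)) =
        ∑' k : ℕ, φ ((Real.Gamma (α * k + α))⁻¹ • (u • Aᵀ) ^ k) := by
      rw [show mlMat α α (u • Aᵀ) = ∑' k : ℕ, (Real.Gamma (α * k + α))⁻¹ • (u • Aᵀ) ^ k
        from rfl]
      exact φ.map_tsum hsum
    calc f u = ∑' k : ℕ, c k • u ^ k := FormalMultilinearSeries.ofScalars_sum_eq c u
      _ = ∑' k : ℕ, φ ((Real.Gamma (α * k + α))⁻¹ • (u • Aᵀ) ^ k) := by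
          apply tsum_congr
          intro k
          rw [smul_pow, _root_.map_smul, _root_.map_smul, hφA k]
          show c k • u ^ k = (Real.Gamma (α * k + α))⁻¹ • u ^ k • wv k
          rw [hc]
          simp only [smul_eq_mul]
          ring
      _ = φ (mlMat α α (u • Aᵀ)) := hφt.symm
      _ = Bᵀ.mulVec ((mlMat α α (u • Aᵀ)).mulVec y₀) i := rfl
  have hTα : 0 < T ^ α := Real.rpow_pos_of_pos hT α
  have hev : ∀ᶠ t in nhdsWithin (0 : ℝ) (Set.Ioi 0), f t = 0 := by
    filter_upwards [Ioo_mem_nhdsGT_of_mem (Set.left_mem_Ico.2 hTα)] with t ht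
    obtain ⟨ht0, htT⟩ := ht
    set s : ℝ := t ^ (α⁻¹) with hs
    have hs0 : 0 ≤ s := Real.rpow_nonneg ht0.le _
    have hsT : s ≤ T := by
      have h1 := Real.rpow_le_rpow ht0.le htT.le (inv_nonneg.2 hα0.le)
      have h2 : (T ^ α) ^ (α⁻¹) = T := by
        rw [← Real.rpow_mul hT.le, mul_inv_cancel₀ hα0.ne', Real.rpow_one]
      rwa [h2] at h1
    have hsα : s ^ α = t := by
      rw [hs, ← Real.rpow_mul ht0.le, inv_mul_cancel₀ hα0.ne', Real.rpow_one]
    have h0 := hvanish s ⟨hs0, hsT⟩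
    rw [hkey t, ← hsα, h0]
    rfl
  have hfreq : ∃ᶠ t in nhdsWithin (0 : ℝ) {(0 : ℝ)}ᶜ, f t = 0 :=
    (hev.frequently).filter_mono (nhdsWithin_mono 0 fun x hx => ne_of_gt hx)
  have he: ∀ᶠ t in nhds (0 : ℝ), f t = 0 :=
    (hfps.analyticAt.frequently_zero_iff_eventually_zero).1 hfreq
  have hp0 : p = 0 := hfps.locally_zero_iff.mp he
  exact (FormalMultilinearSeries.ofScalars_series_eq_zero ℝ).mp hp0
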